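/- arXiv:2306.12827 — 2 statements merged into one kernel-verified Lean document; each statement's English description precedes it below -/
import Mathlib

section
/- For every ε in (0,1], the integral ∫₀^π (cosh r − sinh r · cos θ)^{−(1/2−ε)} dθ is at most C·ε^{−1}·e^{−(1/2−ε)r} for all r ≥ 0, for some absolute constant C > 0. -/
set_option maxHeartbeats 1000000

open Real MeasureTheory intervalIntegral

private lemma sib_base_lb (r θ : ℝ) (hr : 0 ≤ r) :
    Real.exp (-r) ≤ Real.cosh r - Real.sinh r * Real.cos θ := by
  have h0 : 0 ≤ Real.sinh r := Real.sinh_nonneg_iff.mpr hr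
  have h1 : Real.sinh r * Real.cos θ ≤ Real.sinh r := by
    nlinarith [Real.cos_le_one θ]
  have h2 := Real.cosh_sub_sinh r
  linarith

private lemma sib_cont (r c : ℝ) (hr : 0 ≤ r) :
    Continuous fun θ : ℝ => (Real.cosh r - Real.sinh r * Real.cos θ) ^ c := by
  apply Continuous.rpow_const (by continuity)
  intro θ
  exact Or.inl (ne_of_gt (lt_of_lt_of_le (Real.exp_pos _) (sib_base_lb r θ hr)))

theorem spherical_integral_bound :
    ∃ C : ℝ, 0 < C ∧
      ∀ ε : ℝ, 0 < ε → ε ≤ 1 →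
        ∀ r : ℝ, 0 ≤ r →
          (∫ θ in (0:ℝ)..Real.pi,
              (Real.cosh r - Real.sinh r * Real.cos θ) ^ (-(1/2 - ε) : ℝ)) ≤
            C * ε⁻¹ * Real.exp (-(1/2 - ε) * r) := by
  refine ⟨35, by norm_num, fun ε hε hε1 r hr => ?_⟩
  have hεinv : (1:ℝ) ≤ ε⁻¹ := (one_le_inv₀ hε).mpr hε1
  set f : ℝ → ℝ := fun θ => (Real.cosh r - Real.sinh r * Real.cos θ) ^ (-(1/2 - ε) : ℝ) with hf
  have hfc : Continuous f := sib_cont r _ hr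
  have hbl : ∀ θ : ℝ, Real.exp (-r) ≤ Real.cosh r - Real.sinh r * Real.cos θ :=
    fun θ => sib_base_lb r θ hr
  have hsinh : 0 ≤ Real.sinh r := Real.sinh_nonneg_iff.mpr hr
  have hE : 0 < Real.exp (-(1/2 - ε) * r) := Real.exp_pos _
  rcases le_or_gt (1/2 : ℝ) ε with hhalf | hhalf
  · -- easy case: exponent nonneg
    have hpt : ∀ θ ∈ Set.Icc (0:ℝ) Real.pi, f θ ≤ Real.exp (-(1/2 - ε) * r) := by
      intro θ _
      have hub : Real.cosh r - Real.sinh r * Real.cos θ ≤ Real.exp r := by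
        have h1 : -Real.sinh r ≤ Real.sinh r * Real.cos θ := by
          nlinarith [Real.neg_one_le_cos θ]
        have := Real.cosh_add_sinh r
        linarith
      have h0 : (0:ℝ) ≤ Real.cosh r - Real.sinh r * Real.cos θ :=
        le_trans (Real.exp_pos _).le (hbl θ)
      have := Real.rpow_le_rpow h0 hub (by linarith : (0:ℝ) ≤ -(1/2 - ε))
      calc f θ ≤ Real.exp r ^ (-(1/2 - ε) : ℝ) := this
        _ = Real.exp (-(1/2 - ε) * r) := by rw [← Real.exp_mul]; ring_nf
    have h1 : (∫ θ in (0:ℝ)..Real.pi, f θ) ≤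
        ∫ _ in (0:ℝ)..Real.pi, Real.exp (-(1/2 - ε) * r) := by
      apply intervalIntegral.integral_mono_on Real.pi_pos.le
        (hfc.intervalIntegrable _ _) (intervalIntegrable_const) hpt
    rw [intervalIntegral.integral_const, smul_eq_mul, sub_zero] at h1
    refine h1.trans ?_
    nlinarith [Real.pi_lt_d2, hE]
  · -- ε < 1/2
    set s : ℝ := 1/2 - ε with hsdef
    clear_value s
    have hs0 : 0 < s := by rw [hsdef]; linarith
    have hs2 : s ≤ 1/2 := by rw [hsdef]; linarith
    have hεinv2 : (2:ℝ) ≤ ε⁻¹ := by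
      rw [← one_div, le_div_iff₀ hε]; linarith
    have hptA : ∀ θ : ℝ, f θ ≤ Real.exp (s * r) := by
      intro θ
      have := Real.rpow_le_rpow_of_nonpos (Real.exp_pos (-r)) (hbl θ)
        (by linarith : -(1/2 - ε) ≤ (0:ℝ))
      calc f θ ≤ Real.exp (-r) ^ (-(1/2 - ε) : ℝ) := this
        _ = Real.exp (s * r) := by rw [← Real.exp_mul, hsdef]; ring_nf
    rcases le_or_gt r 1 with hr1 | hr1
    · -- small r
      have hexp2 : Real.exp (1/2 : ℝ) ≤ 2 := by
        nlinarith [Real.exp_one_lt_d9, Real.exp_pos (1/2:ℝ),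
          Real.exp_add (1/2:ℝ) (1/2:ℝ), Real.exp_pos (1:ℝ)]
      have hpt : ∀ θ ∈ Set.Icc (0:ℝ) Real.pi, f θ ≤ 2 := by
        intro θ _
        refine (hptA θ).trans ?_
        refine le_trans ?_ hexp2
        apply Real.exp_le_exp.mpr
        nlinarith
      have h1 : (∫ θ in (0:ℝ)..Real.pi, f θ) ≤ ∫ _ in (0:ℝ)..Real.pi, (2:ℝ) := by
        apply intervalIntegral.integral_mono_on Real.pi_pos.le
          (hfc.intervalIntegrable _ _) (intervalIntegrable_const) hpt
      rw [intervalIntegral.integral_const, smul_eq_mul, sub_zero] at h1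
      refine h1.trans ?_
      have hElb : Real.exp (-1/2 : ℝ) ≤ Real.exp (-s * r) := by
        apply Real.exp_le_exp.mpr; rw [hsdef]; nlinarith
      have h2 : (1/2 : ℝ) ≤ Real.exp (-1/2 : ℝ) := by
        rw [show (-1/2:ℝ) = -(1/2:ℝ) by norm_num, Real.exp_neg]
        rw [le_inv_comm₀ (by norm_num) (Real.exp_pos _)]
        simpa using hexp2
      have hkey : (2:ℝ) * (1/2) ≤ ε⁻¹ * Real.exp (-s * r) :=
        mul_le_mul hεinv2 (h2.trans hElb) (by norm_num) (by linarith)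
      nlinarith [Real.pi_lt_d2]
    · -- main case: 1 < r
      set θ₀ : ℝ := Real.pi * Real.exp (-r) with hθ₀def
      have hθ₀pos : 0 < θ₀ := mul_pos Real.pi_pos (Real.exp_pos _)
      have hθ₀le : θ₀ ≤ Real.pi := by
        have : Real.exp (-r) ≤ 1 := Real.exp_le_one_iff.mpr (by linarith)
        nlinarith [Real.pi_pos]
      clear_value θ₀
      have hint : ∀ a b : ℝ, IntervalIntegrable f volume a b :=
        fun a b => hfc.intervalIntegrable a b
      have hsplit : (∫ θ in (0:ℝ)..Real.pi, f θ) =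
          (∫ θ in (0:ℝ)..θ₀, f θ) + ∫ θ in θ₀..Real.pi, f θ :=
        (intervalIntegral.integral_add_adjacent_intervals (hint 0 θ₀) (hint θ₀ Real.pi)).symm
      -- piece 1
      have hI1 : (∫ θ in (0:ℝ)..θ₀, f θ) ≤ θ₀ * Real.exp (s * r) := by
        have h1 : (∫ θ in (0:ℝ)..θ₀, f θ) ≤ ∫ _ in (0:ℝ)..θ₀, Real.exp (s * r) := by
          apply intervalIntegral.integral_mono_on hθ₀pos.le (hint 0 θ₀)
            intervalIntegrable_const (fun θ _ => hptA θ)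
        rwa [intervalIntegral.integral_const, smul_eq_mul, sub_zero] at h1
      have hI1' : θ₀ * Real.exp (s * r) ≤ Real.pi * Real.exp (-(s * r)) := by
        rw [hθ₀def, mul_assoc, ← Real.exp_add]
        have : Real.exp (-r + s * r) ≤ Real.exp (-(s * r)) := by
          apply Real.exp_le_exp.mpr
          nlinarith [mul_nonneg (by linarith : (0:ℝ) ≤ 1 - 2 * s) (by linarith : (0:ℝ) ≤ r)]
        nlinarith [Real.pi_pos, Real.exp_pos (-r + s * r)]
      -- piece 2 pointwise bound
      have hA : ∀ θ ∈ Set.Icc θ₀ Real.pi,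
          Real.exp r * θ ^ (2:ℕ) / (2 * Real.pi ^ 2) ≤
            Real.cosh r - Real.sinh r * Real.cos θ := by
        intro θ hθ
        have hcos : Real.cos θ ≤ 1 - 2 / Real.pi ^ 2 * θ ^ 2 := by
          apply Real.cos_le_one_sub_mul_cos_sq
          rw [abs_of_nonneg (le_trans hθ₀pos.le hθ.1)]
          exact hθ.2
        have hsinh2 : Real.exp r / 4 ≤ Real.sinh r := by
          rw [Real.sinh_eq]
          have h1 : Real.exp (-r) ≤ 1 := Real.exp_le_one_iff.mpr (by linarith)
          have h2 : (2:ℝ) ≤ Real.exp r := by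
            nlinarith [Real.add_one_le_exp r]
          linarith
        have hcsh : Real.sinh r ≤ Real.cosh r := by
          have := Real.cosh_sub_sinh r
          nlinarith [Real.exp_pos (-r)]
        have hθnn : 0 ≤ θ := le_trans hθ₀pos.le hθ.1
        have h1mc : 2 / Real.pi ^ 2 * θ ^ 2 ≤ 1 - Real.cos θ := by linarith
        have hnn : 0 ≤ 2 / Real.pi ^ 2 * θ ^ 2 := by positivity
        have key : Real.sinh r * (2 / Real.pi ^ 2 * θ ^ 2) ≤
            Real.sinh r * (1 - Real.cos θ) :=
          mul_le_mul_of_nonneg_left h1mc hsinh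
        have key2 : Real.exp r / 4 * (2 / Real.pi ^ 2 * θ ^ 2) ≤
            Real.sinh r * (2 / Real.pi ^ 2 * θ ^ 2) :=
          mul_le_mul_of_nonneg_right hsinh2 hnn
        have hpi := Real.pi_pos
        have : Real.exp r / 4 * (2 / Real.pi ^ 2 * θ ^ 2) =
            Real.exp r * θ ^ (2:ℕ) / (2 * Real.pi ^ 2) := by
          field_simp; ring
        nlinarith
      have hptB : ∀ θ ∈ Set.Icc θ₀ Real.pi,
          f θ ≤ 2 * Real.pi ^ 2 * Real.exp (-(s * r)) * θ ^ (-(2 * s) : ℝ) := by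
        intro θ hθ
        have hθpos : 0 < θ := lt_of_lt_of_le hθ₀pos hθ.1
        have hApos : 0 < Real.exp r * θ ^ (2:ℕ) / (2 * Real.pi ^ 2) := by positivity
        have h1 : f θ ≤ (Real.exp r * θ ^ (2:ℕ) / (2 * Real.pi ^ 2)) ^ (-(1/2 - ε) : ℝ) :=
          Real.rpow_le_rpow_of_nonpos hApos (hA θ hθ) (by linarith)
        have heq : (Real.exp r * θ ^ (2:ℕ) / (2 * Real.pi ^ 2)) ^ (-(1/2 - ε) : ℝ) =
            Real.exp (-(s * r)) * θ ^ (-(2 * s) : ℝ) * (2 * Real.pi ^ 2) ^ (s : ℝ) := by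
          rw [Real.div_rpow (by positivity) (by positivity),
            Real.mul_rpow (Real.exp_pos r).le (by positivity),
            ← Real.exp_mul,
            ← Real.rpow_natCast θ 2, ← Real.rpow_mul hθpos.le,
            Real.rpow_neg (by positivity : (0:ℝ) ≤ 2 * Real.pi ^ 2),
            div_eq_mul_inv, inv_inv]
          rw [hsdef]
          push_cast
          ring_nf
        rw [heq] at h1
        refine h1.trans ?_
        have h2 : (2 * Real.pi ^ 2 : ℝ) ^ (s : ℝ) ≤ 2 * Real.pi ^ 2 := by
          calc (2 * Real.pi ^ 2 : ℝ) ^ (s : ℝ) ≤ (2 * Real.pi ^ 2 : ℝ) ^ (1 : ℝ) := by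
                apply Real.rpow_le_rpow_of_exponent_le
                · nlinarith [Real.pi_gt_three]
                · linarith
            _ = 2 * Real.pi ^ 2 := Real.rpow_one _
        have hp1 : (0:ℝ) < Real.exp (-(s * r)) := Real.exp_pos _
        have hp2 : (0:ℝ) < θ ^ (-(2 * s) : ℝ) := Real.rpow_pos_of_pos hθpos _
        calc Real.exp (-(s * r)) * θ ^ (-(2 * s) : ℝ) * (2 * Real.pi ^ 2) ^ (s : ℝ)
            ≤ Real.exp (-(s * r)) * θ ^ (-(2 * s) : ℝ) * (2 * Real.pi ^ 2) :=
              mul_le_mul_of_nonneg_left h2 (by positivity)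
          _ = 2 * Real.pi ^ 2 * Real.exp (-(s * r)) * θ ^ (-(2 * s) : ℝ) := by ring
      -- piece 2 integral bound
      have hg_int : IntervalIntegrable
          (fun θ : ℝ => 2 * Real.pi ^ 2 * Real.exp (-(s * r)) * θ ^ (-(2 * s) : ℝ))
          volume θ₀ Real.pi := by
        apply ContinuousOn.intervalIntegrable
        apply ContinuousOn.mul continuousOn_const
        intro x hx
        rw [Set.uIcc_of_le hθ₀le] at hx
        exact (Real.continuousAt_rpow_const x _
          (Or.inl (ne_of_gt (lt_of_lt_of_le hθ₀pos hx.1)))).continuousWithinAt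
      have hI2 : (∫ θ in θ₀..Real.pi, f θ) ≤
          ∫ θ in θ₀..Real.pi, 2 * Real.pi ^ 2 * Real.exp (-(s * r)) * θ ^ (-(2 * s) : ℝ) :=
        intervalIntegral.integral_mono_on hθ₀le (hint θ₀ Real.pi) hg_int hptB
      have hrpow_int : (∫ θ in θ₀..Real.pi, θ ^ (-(2 * s) : ℝ)) ≤ Real.pi / (2 * ε) := by
        rw [integral_rpow (Or.inl (by linarith : (-1:ℝ) < -(2 * s)))]
        have he1 : -(2 * s) + 1 = 2 * ε := by rw [hsdef]; ring
        rw [he1]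
        have h1 : Real.pi ^ (2 * ε : ℝ) ≤ Real.pi := by
          calc Real.pi ^ (2 * ε : ℝ) ≤ Real.pi ^ (1 : ℝ) := by
                apply Real.rpow_le_rpow_of_exponent_le
                · nlinarith [Real.pi_gt_three]
                · linarith
            _ = Real.pi := Real.rpow_one _
        have h2 : (0:ℝ) ≤ θ₀ ^ (2 * ε : ℝ) := Real.rpow_nonneg hθ₀pos.le _
        have hε2 : (0:ℝ) < 2 * ε := by linarith
        rw [div_le_div_iff₀ hε2 hε2]
        nlinarith
      have hI2'' : (∫ θ in θ₀..Real.pi,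
            2 * Real.pi ^ 2 * Real.exp (-(s * r)) * θ ^ (-(2 * s) : ℝ))
          = 2 * Real.pi ^ 2 * Real.exp (-(s * r)) *
              ∫ θ in θ₀..Real.pi, θ ^ (-(2 * s) : ℝ) :=
        intervalIntegral.integral_const_mul _ _
      have hc : (0:ℝ) < 2 * Real.pi ^ 2 * Real.exp (-(s * r)) := by positivity
      have hI2f : (∫ θ in θ₀..Real.pi, f θ) ≤
          2 * Real.pi ^ 2 * Real.exp (-(s * r)) * (Real.pi / (2 * ε)) := by
        refine hI2.trans ?_
        rw [hI2'']
        exact mul_le_mul_of_nonneg_left hrpow_int hc.le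
      rw [hsplit]
      have hEs : Real.exp (-s * r) = Real.exp (-(s * r)) := by ring_nf
      rw [hEs]
      have hE' : (0:ℝ) < Real.exp (-(s * r)) := Real.exp_pos _
      have hfinal : θ₀ * Real.exp (s * r) +
          2 * Real.pi ^ 2 * Real.exp (-(s * r)) * (Real.pi / (2 * ε)) ≤
          35 * ε⁻¹ * Real.exp (-(s * r)) := by
        have h1 : 2 * Real.pi ^ 2 * Real.exp (-(s * r)) * (Real.pi / (2 * ε)) =
            Real.pi ^ 3 * ε⁻¹ * Real.exp (-(s * r)) := by
          field_simp
        rw [h1]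
        have h2 : Real.pi * Real.exp (-(s * r)) ≤
            Real.pi * ε⁻¹ * Real.exp (-(s * r)) := by
          nlinarith [Real.pi_pos]
        have h3 : Real.pi ^ 3 ≤ 32 := by nlinarith [Real.pi_lt_d2, Real.pi_pos]
        have h4 : (0:ℝ) < ε⁻¹ * Real.exp (-(s * r)) :=
          mul_pos (inv_pos.mpr hε) hE'
        nlinarith [Real.pi_lt_d2, Real.pi_pos]
      linarith [hI1, hI1', hI2f, hfinal]
end

section
/- Let φ: ℝ → ℂ satisfy |φ̂(u)| ∼ (1+|u|)^{−α} for some α > 1/2 (i.e. there are constants 0 < c ≤ C with c·(1+|u|)^{−α} ≤ |φ̂(u)| ≤ C·(1+|u|)^{−α} for all u). Fix η ∈ (0,1) and p > 2. Then ∫₀^∞ y^{p/2} · |φ̂(η·log y)|^p · y^{−2} dy = ∞, while ∫₀^∞ y · |φ̂(η·log y)|^2 · y^{−2} dy < ∞. -/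
open MeasureTheory

lemma lintegral_Ioi_eq_lintegral_exp (g : ℝ → ENNReal) :
    ∫⁻ y in Set.Ioi (0:ℝ), g y
      = ∫⁻ u, ENNReal.ofReal (Real.exp u) * g (Real.exp u) := by
  have h := lintegral_image_eq_lintegral_abs_det_fderiv_mul volume MeasurableSet.univ
    (f := Real.exp) (f' := fun x => (1 : ℝ →L[ℝ] ℝ).smulRight (Real.exp x))
    (fun x _ => (Real.hasDerivAt_exp x).hasFDerivAt.hasFDerivWithinAt)
    (Real.exp_injective.injOn) g
  rw [Set.image_univ, Real.range_exp] at h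
  rw [h]
  simp [ContinuousLinearMap.det_toSpanSingleton, abs_of_pos (Real.exp_pos _), Measure.restrict_univ]

theorem cusp_example_L2_not_Lp (φ : ℝ → ℂ) (F : ℝ → ℂ)
    (hF : F = FourierTransform.fourier φ)
    (α c C : ℝ) (hα : 1/2 < α) (hc : 0 < c) (hcC : c ≤ C)
    (hlow : ∀ u : ℝ, c * (1 + |u|) ^ (-α) ≤ ‖F u‖)
    (hup : ∀ u : ℝ, ‖F u‖ ≤ C * (1 + |u|) ^ (-α))
    (η p : ℝ) (hη0 : 0 < η) (hη1 : η < 1) (hp : 2 < p) :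
    (∫⁻ y in Set.Ioi (0:ℝ),
        ENNReal.ofReal (y ^ (p/2) * ‖F (η * Real.log y)‖ ^ p * y ^ (-2 : ℝ)) = ⊤) ∧
    (∫⁻ y in Set.Ioi (0:ℝ),
        ENNReal.ofReal (y * ‖F (η * Real.log y)‖ ^ 2 * y ^ (-2 : ℝ)) < ⊤) := by
  have hC : 0 < C := lt_of_lt_of_le hc hcC
  constructor
  · -- divergence of the L^p integral
    rw [lintegral_Ioi_eq_lintegral_exp]
    set β : ℝ := p/2 - 1 with hβdef
    have hβ : 0 < β := by simp [hβdef]; linarith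
    set γ : ℝ := α * p with hγdef
    have hγ : 0 < γ := mul_pos (by linarith) (by linarith)
    -- eventually exp (β u) ≥ (1+u)^γ
    have h0 := tendsto_rpow_mul_exp_neg_mul_atTop_nhds_zero γ β hβ
    have h1 : Filter.Tendsto (fun u : ℝ => (1+u) ^ γ * Real.exp (-β * (1+u)))
        Filter.atTop (nhds 0) :=
      h0.comp (Filter.tendsto_atTop_add_const_left _ 1 Filter.tendsto_id)
    have h2 : ∀ᶠ u : ℝ in Filter.atTop,
        (1+u) ^ γ * Real.exp (-β * (1+u)) < Real.exp (-β) :=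
      h1.eventually_lt_const (Real.exp_pos _)
    obtain ⟨M, hM⟩ := Filter.eventually_atTop.1 h2
    set M' : ℝ := max M 0 with hM'def
    -- pointwise lower bound on Ioi M'
    have key : ∀ u ∈ Set.Ioi M',
        ENNReal.ofReal (c ^ p)
          ≤ ENNReal.ofReal (Real.exp u) *
            ENNReal.ofReal (Real.exp u ^ (p/2) *
              ‖F (η * Real.log (Real.exp u))‖ ^ p * Real.exp u ^ (-2 : ℝ)) := by
      intro u hu
      have hu0 : 0 ≤ u := le_of_lt (lt_of_le_of_lt (le_max_right M 0) hu)
      have huM : M ≤ u := le_of_lt (lt_of_le_of_lt (le_max_left M 0) hu)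
      rw [Real.log_exp, ← ENNReal.ofReal_mul (Real.exp_pos u).le]
      apply ENNReal.ofReal_le_ofReal
      set N : ℝ := ‖F (η * u)‖ with hNdef
      have hsimp : Real.exp u * (Real.exp u ^ (p/2) * N ^ p * Real.exp u ^ (-2 : ℝ))
          = Real.exp (β * u) * N ^ p := by
        rw [← Real.exp_mul, ← Real.exp_mul,
          show β * u = u * (p/2) + (u + u * (-2)) by rw [hβdef]; ring,
          Real.exp_add, Real.exp_add]
        ring
      rw [hsimp]
      -- lower bound for N^p
      have h1u : (0:ℝ) < 1 + u := by linarith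
      have h1ηu : (0:ℝ) < 1 + η * u := by nlinarith
      have hNlow : c ^ p * (1+u) ^ (-γ) ≤ N ^ p := by
        have habs : |η * u| = η * u := abs_of_nonneg (by positivity)
        have hb := hlow (η * u)
        rw [habs] at hb
        have hb0 : 0 ≤ c * (1 + η * u) ^ (-α) := by positivity
        have h3 : (c * (1 + η * u) ^ (-α)) ^ p ≤ N ^ p :=
          Real.rpow_le_rpow hb0 hb (by linarith)
        have h4 : (c * (1 + η * u) ^ (-α)) ^ p
            = c ^ p * (1 + η * u) ^ (-γ) := by
          rw [Real.mul_rpow hc.le (Real.rpow_nonneg h1ηu.le _),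
            ← Real.rpow_mul h1ηu.le, show (-α) * p = -γ by rw [hγdef]; ring]
        have h5 : (1 + u) ^ (-γ) ≤ (1 + η * u) ^ (-γ) := by
          apply Real.rpow_le_rpow_of_nonpos h1ηu _ (by linarith)
          nlinarith
        calc c ^ p * (1+u) ^ (-γ) ≤ c ^ p * (1 + η * u) ^ (-γ) := by
              apply mul_le_mul_of_nonneg_left h5 (Real.rpow_nonneg hc.le _)
          _ = (c * (1 + η * u) ^ (-α)) ^ p := h4.symm
          _ ≤ N ^ p := h3
      -- exp (β u) * (1+u)^(-γ) ≥ 1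
      have hexp : (1:ℝ) ≤ Real.exp (β * u) * (1+u) ^ (-γ) := by
        have h6 := hM u huM
        have h7 : (1+u) ^ γ ≤ Real.exp (β * u) := by
          have h9 := mul_lt_mul_of_pos_right h6 (Real.exp_pos (β * (1+u)))
          rw [mul_assoc, ← Real.exp_add, show -β * (1+u) + β * (1+u) = 0 by ring,
            Real.exp_zero, mul_one, ← Real.exp_add,
            show -β + β * (1+u) = β * u by ring] at h9
          exact h9.le
        rw [Real.rpow_neg h1u.le, ← div_eq_mul_inv, le_div_iff₀ (Real.rpow_pos_of_pos h1u γ)]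
        linarith
      calc c ^ p = c ^ p * 1 := (mul_one _).symm
        _ ≤ c ^ p * (Real.exp (β * u) * (1+u) ^ (-γ)) := by
            apply mul_le_mul_of_nonneg_left hexp (Real.rpow_nonneg hc.le _)
        _ = Real.exp (β * u) * (c ^ p * (1+u) ^ (-γ)) := by ring
        _ ≤ Real.exp (β * u) * N ^ p := by
            apply mul_le_mul_of_nonneg_left hNlow (Real.exp_pos _).le
    -- conclude divergence
    rw [eq_top_iff]
    calc (⊤ : ENNReal) = ENNReal.ofReal (c ^ p) * volume (Set.Ioi M') := by
          rw [Real.volume_Ioi, ENNReal.mul_top]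
          simp [ENNReal.ofReal_eq_zero, not_le, Real.rpow_pos_of_pos hc p]
      _ = ∫⁻ _ in Set.Ioi M', ENNReal.ofReal (c ^ p) := (setLIntegral_const _ _).symm
      _ ≤ ∫⁻ u in Set.Ioi M', ENNReal.ofReal (Real.exp u) *
            ENNReal.ofReal (Real.exp u ^ (p/2) *
              ‖F (η * Real.log (Real.exp u))‖ ^ p * Real.exp u ^ (-2 : ℝ)) :=
          setLIntegral_mono' measurableSet_Ioi key
      _ ≤ _ := setLIntegral_le_lintegral _ _
  · -- convergence of the L^2 integral
    rw [lintegral_Ioi_eq_lintegral_exp]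
    have h2α : (1:ℝ) < 2 * α := by linarith
    set K : ℝ := (C * η ^ (-α)) ^ 2 with hKdef
    have hint : Integrable (fun u : ℝ => K * (1 + ‖u‖) ^ (-(2*α))) := by
      exact (integrable_one_add_norm (by simpa using h2α)).const_mul K
    have hbound : ∀ u : ℝ,
        ENNReal.ofReal (Real.exp u) *
          ENNReal.ofReal (Real.exp u * ‖F (η * Real.log (Real.exp u))‖ ^ 2 *
            Real.exp u ^ (-2 : ℝ))
        ≤ ENNReal.ofReal (K * (1 + ‖u‖) ^ (-(2*α))) := by
      intro u
      rw [Real.log_exp, ← ENNReal.ofReal_mul (Real.exp_pos u).le]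
      apply ENNReal.ofReal_le_ofReal
      set N : ℝ := ‖F (η * u)‖ with hNdef
      have hsimp : Real.exp u * (Real.exp u * N ^ 2 * Real.exp u ^ (-2 : ℝ))
          = N ^ 2 := by
        rw [show ((-2):ℝ) = -(2:ℝ) by norm_num, Real.rpow_neg (Real.exp_pos u).le,
          show ((2):ℝ) = ((2:ℕ):ℝ) by norm_num, Real.rpow_natCast]
        calc Real.exp u * (Real.exp u * N ^ 2 * (Real.exp u ^ 2)⁻¹)
            = N ^ 2 * (Real.exp u ^ 2 * (Real.exp u ^ 2)⁻¹) := by ring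
          _ = N ^ 2 := by rw [mul_inv_cancel₀ (by positivity), mul_one]
      rw [hsimp]
      have h1u : (0:ℝ) < 1 + |u| := by positivity
      have h1ηu : (0:ℝ) < 1 + η * |u| := by positivity
      have hNup : N ≤ C * η ^ (-α) * (1 + |u|) ^ (-α) := by
        have hb := hup (η * u)
        rw [abs_mul, abs_of_pos hη0] at hb
        have h5 : (1 + η * |u|) ^ (-α) ≤ (η * (1 + |u|)) ^ (-α) := by
          apply Real.rpow_le_rpow_of_nonpos (by positivity) _ (by linarith)
          nlinarith [abs_nonneg u]
        have h6 : (η * (1 + |u|)) ^ (-α) = η ^ (-α) * (1 + |u|) ^ (-α) :=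
          Real.mul_rpow hη0.le h1u.le
        calc N ≤ C * (1 + η * |u|) ^ (-α) := hb
          _ ≤ C * (η * (1 + |u|)) ^ (-α) := by
              apply mul_le_mul_of_nonneg_left h5 hC.le
          _ = C * η ^ (-α) * (1 + |u|) ^ (-α) := by rw [h6]; ring
      have hrhs : K * (1 + ‖u‖) ^ (-(2*α))
          = (C * η ^ (-α) * (1 + |u|) ^ (-α)) ^ 2 := by
        rw [hKdef, Real.norm_eq_abs, mul_pow,
          show (-(2*α) : ℝ) = (-α) + (-α) by ring, Real.rpow_add h1u]
        ring
      rw [hrhs]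
      exact pow_le_pow_left₀ (norm_nonneg _) hNup 2
    calc ∫⁻ u, ENNReal.ofReal (Real.exp u) *
          ENNReal.ofReal (Real.exp u * ‖F (η * Real.log (Real.exp u))‖ ^ 2 *
            Real.exp u ^ (-2 : ℝ))
        ≤ ∫⁻ u, ENNReal.ofReal (K * (1 + ‖u‖) ^ (-(2*α))) := lintegral_mono hbound
      _ < ⊤ := hint.lintegral_lt_top
end
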